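/- Under the setup, the polar function of γ°, namely (γ°)°(p) := sup{p·q : q ∈ ℝ², γ°(q) ≤ 1}, satisfies (γ°)°(p) = max_{0 ≤ j ≤ N−1} n_j·p for every p ∈ ℝ²; i.e., the crystalline energy density γ recovered from the support function γ° is the piecewise linear function γ(p) = max_j n_j·p with n_j = r_j(cos θ_j, sin θ_j). -/

import Mathlib

open Real

/-- Euclidean inner product on `ℝ × ℝ`. -/
def dot (p q : ℝ × ℝ) : ℝ := p.1 * q.1 + p.2 * q.2

/-- Reduce an index modulo the period of a periodic function. -/
lemma per_shift {α : Type*} (N : ℕ) (hN : 0 < N) (f : ℤ → α)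
    (hf : ∀ j : ℤ, f (j + N) = f j) (j : ℤ) :
    ∃ k : ℕ, k < N ∧ ((k : ℤ) % N = j % N) ∧ f j = f k := by
  have hshift : ∀ t : ℤ, ∀ x : ℤ, f (x + t * N) = f x := by
    intro t
    induction t using Int.induction_on with
    | zero => intro x; simp
    | succ t ih =>
        intro x
        have : x + (t + 1 : ℤ) * N = (x + N) + t * N := by ring
        rw [this, ih (x + N), hf x]
    | pred t ih =>
        intro x
        have h1 : x + (-(t:ℤ) - 1) * N = (x - N) + (-(t:ℤ)) * N := by ring
        have h2 : f (x - N) = f x := by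
          have := hf (x - N); simpa using this.symm
        rw [h1, ih (x - N), h2]
  have hN' : (0 : ℤ) < N := by exact_mod_cast hN
  have hnn : 0 ≤ j % N := Int.emod_nonneg j (by omega)
  have hlt : j % N < N := Int.emod_lt_of_pos j hN'
  refine ⟨(j % N).toNat, ?_, ?_, ?_⟩
  · omega
  · rw [Int.toNat_of_nonneg hnn]
    exact Int.emod_emod_of_dvd j dvd_rfl
  · have : f j = f (j % N) := by
      have := hshift (j / N) (j % N)
      rw [show j % N + (j / N) * N = j by have := Int.emod_add_mul_ediv j N; linarith] at this
      exact this
    rw [this, Int.toNat_of_nonneg hnn]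

/-- Floor-type lemma for strictly monotone unbounded `f : ℤ → ℝ`. -/
lemma exists_floor'' (f : ℤ → ℝ) (hmono : StrictMono f)
    (hub : ∀ B : ℝ, ∃ j, B < f j) (hlb : ∀ B : ℝ, ∃ j, f j < B) (x : ℝ) :
    ∃ j, f j ≤ x ∧ x < f (j + 1) := by
  classical
  obtain ⟨j₀, hj₀⟩ := hlb x
  have Hbdd : ∃ b : ℤ, ∀ z : ℤ, x < f z → b ≤ z := by
    refine ⟨j₀, fun z hz => ?_⟩
    by_contra hlt
    push_neg at hlt
    have := hmono (show z < j₀ by omega)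
    linarith
  have Hinh : ∃ z : ℤ, x < f z := hub x
  obtain ⟨lb, hlb1, hlb2⟩ := Int.exists_least_of_bdd Hbdd Hinh
  refine ⟨lb - 1, ?_, by simpa using hlb1⟩
  by_contra h
  push_neg at h
  have := hlb2 _ h
  omega

set_option maxHeartbeats 1000000


/-- Under the assumptions (γ1)–(γ3), the polar function of
`γ°(p) = max_j m_j · p`, namely `(γ°)°(p) = sup {p · q : γ°(q) ≤ 1}`, equals
`max_j n_j · p` for every `p`: the crystalline energy density recovered from
the support function `γ°` is the piecewise linear function
`γ(p) = max_j n_j · p` with `n_j = r_j (cos θ_j, sin θ_j)`. -/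
theorem polar_of_support_is_piecewise_linear
    (N : ℕ) (hN : 3 ≤ N)
    (η ψ : ℤ → ℝ)
    (hηpos : ∀ j, 0 < η j)
    (hηper : ∀ j, η (j + N) = η j)
    (hψper : ∀ j, ψ (j + N) = ψ j + 2 * π)
    (hψmono : ∀ j, ψ j < ψ (j + 1))
    (hψgap : ∀ j, ψ (j + 1) < ψ j + π)
    (m : ℤ → ℝ × ℝ)
    (hm : ∀ j, m j = (η j * cos (ψ j), η j * sin (ψ j)))
    (γpol : ℝ × ℝ → ℝ)
    (hγpol : ∀ p, γpol p = (Finset.range N).sup'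
      (Finset.nonempty_range_iff.mpr (by omega)) (fun j => dot (m (j : ℤ)) p))
    -- (γ3): each maximality region is cut out by the two neighbouring
    -- constraints, and is nonempty (contains a point of strict maximality).
    (hγ3a : ∀ j : ℤ,
      {p : ℝ × ℝ | ∀ k ∈ Finset.range N, dot (m (k : ℤ)) p ≤ dot (m j) p}
        = {p : ℝ × ℝ | dot (m (j - 1)) p ≤ dot (m j) p ∧
            dot (m (j + 1)) p ≤ dot (m j) p})
    (hγ3b : ∀ j : ℤ, ∃ p : ℝ × ℝ,
      ∀ k ∈ Finset.range N, (k : ℤ) % N ≠ j % N → dot (m (k : ℤ)) p < dot (m j) p)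
    (a b c θ r : ℤ → ℝ) (n : ℤ → ℝ × ℝ)
    (ha : ∀ j, a j = η j * cos (ψ j) - η (j - 1) * cos (ψ (j - 1)))
    (hb : ∀ j, b j = η j * sin (ψ j) - η (j - 1) * sin (ψ (j - 1)))
    (hc : ∀ j, cos (c j) = a j / Real.sqrt (a j ^ 2 + b j ^ 2) ∧
      sin (c j) = b j / Real.sqrt (a j ^ 2 + b j ^ 2))
    (hθ : ∀ j, θ j = c j + π / 2)
    (hr : ∀ j, r j = (η j * cos (θ j - ψ j))⁻¹)
    (hn : ∀ j, n j = (r j * cos (θ j), r j * sin (θ j))) :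
    ∀ p : ℝ × ℝ,
      IsLUB {s : ℝ | ∃ q : ℝ × ℝ, γpol q ≤ 1 ∧ dot p q = s}
        ((Finset.range N).sup' (Finset.nonempty_range_iff.mpr (by omega))
          (fun j => dot (n (j : ℤ)) p)) := by
    -- Basic positivity facts
  have hπ : (0:ℝ) < π := Real.pi_pos
  have hNpos : 0 < N := by omega
  have hne : (Finset.range N).Nonempty := Finset.nonempty_range_iff.mpr (by omega)
  have hm1 : ∀ j : ℤ, (m j).1 = η j * cos (ψ j) := by intro j; rw [hm]
  have hm2 : ∀ j : ℤ, (m j).2 = η j * sin (ψ j) := by intro j; rw [hm]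
  -- gaps
  have hgap : ∀ j : ℤ, 0 < ψ j - ψ (j-1) ∧ ψ j - ψ (j-1) < π := by
    intro j
    have h1 := hψmono (j-1)
    have h2 := hψgap (j-1)
    rw [show j - 1 + 1 = j by ring] at h1 h2
    constructor <;> linarith
  -- periodicity of m
  have hmper : ∀ j : ℤ, m (j + N) = m j := by
    intro j
    rw [hm, hm, hηper, hψper, Real.cos_add_two_pi, Real.sin_add_two_pi]
  -- a, b as differences of m
  have hab : ∀ j : ℤ, a j = (m j).1 - (m (j-1)).1 ∧ b j = (m j).2 - (m (j-1)).2 := by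
    intro j
    simp only [ha, hb, hm1, hm2]
    constructor <;> trivial
  -- the denominator X j := a j * (m j).2 - b j * (m j).1
  have hXsin : ∀ j : ℤ, a j * (m j).2 - b j * (m j).1
      = -(η (j-1) * η j * Real.sin (ψ j - ψ (j-1))) := by
    intro j
    simp only [ha, hb, hm1, hm2, Real.sin_sub]
    ring
  have hXneg : ∀ j : ℤ, a j * (m j).2 - b j * (m j).1 < 0 := by
    intro j
    rw [hXsin j]
    have hs : 0 < Real.sin (ψ j - ψ (j-1)) :=
      Real.sin_pos_of_pos_of_lt_pi (hgap j).1 (hgap j).2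
    have hpr : 0 < η (j-1) * η j * Real.sin (ψ j - ψ (j-1)) :=
      mul_pos (mul_pos (hηpos (j-1)) (hηpos j)) hs
    linarith
  -- a j ^2 + b j^2 > 0
  have habpos : ∀ j : ℤ, 0 < a j ^ 2 + b j ^ 2 := by
    intro j
    rcases lt_or_ge 0 (a j ^ 2 + b j ^ 2) with h | h
    · exact h
    · exfalso
      have ha0 : a j = 0 := by nlinarith [sq_nonneg (a j), sq_nonneg (b j)]
      have hb0 : b j = 0 := by nlinarith [sq_nonneg (a j), sq_nonneg (b j)]
      have := hXneg j
      rw [ha0, hb0] at this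
      norm_num at this
  -- explicit formula for n j
  have hnval : ∀ j : ℤ, n j = (-(b j) / (a j * (m j).2 - b j * (m j).1),
      a j / (a j * (m j).2 - b j * (m j).1)) := by
    intro j
    set D := Real.sqrt (a j ^ 2 + b j ^ 2) with hDdef
    have hD : 0 < D := Real.sqrt_pos.mpr (habpos j)
    have hDne : D ≠ 0 := ne_of_gt hD
    have hcosθ : cos (θ j) = -(b j) / D := by
      rw [hθ, Real.cos_add_pi_div_two, (hc j).2, hDdef]; ring
    have hsinθ : sin (θ j) = a j / D := by
      rw [hθ, Real.sin_add_pi_div_two, (hc j).1, hDdef]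
    have hX := hXneg j
    have hXne : a j * (m j).2 - b j * (m j).1 ≠ 0 := ne_of_lt hX
    have hkey : η j * cos (θ j - ψ j)
        = (a j * (m j).2 - b j * (m j).1) / D := by
      rw [Real.cos_sub, hcosθ, hsinθ]
      simp only [hm1, hm2]
      field_simp
      ring
    rw [hn, hr, hkey, Prod.mk.injEq]
    have hrr : ((a j * (m j).2 - b j * (m j).1) / D)⁻¹
        = D / (a j * (m j).2 - b j * (m j).1) := inv_div _ _
    rw [hrr, hcosθ, hsinθ]
    constructor
    · field_simp
    · field_simp
  -- generic dot with n j
  have hdotn : ∀ (j : ℤ) (q : ℝ × ℝ), dot q (n j)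
      = (a j * q.2 - b j * q.1) / (a j * (m j).2 - b j * (m j).1) := by
    intro j q
    have hXne : a j * (m j).2 - b j * (m j).1 ≠ 0 := ne_of_lt (hXneg j)
    rw [hnval j]
    simp only [dot]
    field_simp
    ring
  have hdotcomm : ∀ x y : ℝ × ℝ, dot x y = dot y x := by
    intro x y; simp only [dot]; ring
  -- numerator identities
  have hnum_prev : ∀ j : ℤ, a j * (m (j-1)).2 - b j * (m (j-1)).1
      = a j * (m j).2 - b j * (m j).1 := by
    intro j
    rw [(hab j).1, (hab j).2]
    ring
  have hnum_next : ∀ j : ℤ, a j * (m (j+1)).2 - b j * (m (j+1)).1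
      = (a j * (m j).2 - b j * (m j).1) - (b j * a (j+1) - a j * b (j+1)) := by
    intro j
    have h1 := (hab (j+1)).1
    have h2 := (hab (j+1)).2
    rw [show j + 1 - 1 = j by ring] at h1 h2
    have e1 : (m (j+1)).1 = (m j).1 + a (j+1) := by linarith
    have e2 : (m (j+1)).2 = (m j).2 + b (j+1) := by linarith
    rw [e1, e2]
    ring
  -- dot products of the m's with n j
  have hdot_self : ∀ j : ℤ, dot (m j) (n j) = 1 := by
    intro j
    rw [hdotn j (m j), div_self (ne_of_lt (hXneg j))]
  have hdot_prev : ∀ j : ℤ, dot (m (j-1)) (n j) = 1 := by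
    intro j
    rw [hdotn j (m (j-1)), hnum_prev j, div_self (ne_of_lt (hXneg j))]
  -- strict monotonicity and unboundedness of ψ
  have hmono : StrictMono ψ := strictMono_int_of_lt_succ hψmono
  have hψt : ∀ t : ℤ, ψ (t * N) = ψ 0 + 2 * π * t := by
    intro t
    induction t using Int.induction_on with
    | zero => simp
    | succ t ih =>
        have h0 : ((t:ℤ) + 1) * N = (t * N : ℤ) + N := by ring
        rw [h0, hψper (t * N), ih]
        push_cast
        ring
    | pred t ih =>
        have h0 : (-(t:ℤ) - 1) * N + N = (-(t:ℤ)) * N := by ring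
        have h1 := hψper ((-(t:ℤ) - 1) * N)
        rw [h0] at h1
        rw [show ψ ((-(t:ℤ) - 1) * N) = ψ ((-(t:ℤ)) * N) - 2 * π by linarith, ih]
        push_cast
        ring
  have hub : ∀ B : ℝ, ∃ j : ℤ, B < ψ j := by
    intro B
    obtain ⟨t, ht⟩ := exists_nat_gt ((B - ψ 0) / (2 * π))
    refine ⟨(t : ℤ) * N, ?_⟩
    rw [hψt t]
    have h2π : 0 < 2 * π := by linarith
    have := (div_lt_iff₀ h2π).mp ht
    push_cast
    linarith
  have hlb : ∀ B : ℝ, ∃ j : ℤ, ψ j < B := by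
    intro B
    obtain ⟨t, ht⟩ := exists_nat_gt ((ψ 0 - B) / (2 * π))
    refine ⟨(-(t:ℤ)) * N, ?_⟩
    rw [hψt (-(t:ℤ))]
    have h2π : 0 < 2 * π := by linarith
    have := (div_lt_iff₀ h2π).mp ht
    push_cast
    linarith
  -- the covering lemma: every p is a nonnegative combination of two consecutive m's
  have hcov : ∀ p : ℝ × ℝ, ∃ (j : ℤ) (α β : ℝ), 0 ≤ α ∧ 0 ≤ β ∧
      p.1 = α * (m j).1 + β * (m (j+1)).1 ∧ p.2 = α * (m j).2 + β * (m (j+1)).2 := by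
    intro p
    by_cases hp : p = 0
    · exact ⟨0, 0, 0, le_refl _, le_refl _, by simp [hp], by simp [hp]⟩
    · obtain ⟨R, φ, hR, hp1, hp2⟩ :
          ∃ R φ : ℝ, 0 < R ∧ p.1 = R * cos φ ∧ p.2 = R * sin φ := by
        have hz0 : (⟨p.1, p.2⟩ : ℂ) ≠ 0 := by
          simp only [ne_eq, Complex.ext_iff, Complex.zero_re, Complex.zero_im]
          intro hcontra
          exact hp (Prod.ext hcontra.1 hcontra.2)
        have habs : 0 < ‖(⟨p.1, p.2⟩ : ℂ)‖ := norm_pos_iff.mpr hz0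
        refine ⟨‖(⟨p.1, p.2⟩ : ℂ)‖, Complex.arg ⟨p.1, p.2⟩, habs, ?_, ?_⟩
        · rw [Complex.cos_arg hz0]
          field_simp
        · rw [Complex.sin_arg]
          field_simp
      obtain ⟨j, hj1, hj2⟩ := exists_floor'' ψ hmono hub hlb φ
      have hjgap := hψgap j
      have hjmono := hψmono j
      have hηj := hηpos j
      have hηj1 := hηpos (j+1)
      have hspos : 0 < Real.sin (ψ (j+1) - ψ j) :=
        Real.sin_pos_of_pos_of_lt_pi (by linarith) (by linarith)
      have hcpos : 0 < η j * η (j+1) * Real.sin (ψ (j+1) - ψ j) :=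
        mul_pos (mul_pos hηj hηj1) hspos
      have hCne : η j * η (j+1) * Real.sin (ψ (j+1) - ψ j) ≠ 0 := ne_of_gt hcpos
      have hs1 : 0 ≤ Real.sin (ψ (j+1) - φ) :=
        Real.sin_nonneg_of_nonneg_of_le_pi (by linarith) (by linarith)
      have hs2 : 0 ≤ Real.sin (φ - ψ j) :=
        Real.sin_nonneg_of_nonneg_of_le_pi (by linarith) (by linarith)
      refine ⟨j, R * η (j+1) * Real.sin (ψ (j+1) - φ) / (η j * η (j+1) * Real.sin (ψ (j+1) - ψ j)),
        R * η j * Real.sin (φ - ψ j) / (η j * η (j+1) * Real.sin (ψ (j+1) - ψ j)),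
        ?_, ?_, ?_, ?_⟩
      · apply div_nonneg _ (le_of_lt hcpos)
        positivity
      · apply div_nonneg _ (le_of_lt hcpos)
        positivity
      · rw [hm1 j, hm1 (j+1), hp1, div_mul_eq_mul_div, div_mul_eq_mul_div,
          ← add_div, eq_div_iff hCne, Real.sin_sub, Real.sin_sub, Real.sin_sub]
        ring
      · rw [hm2 j, hm2 (j+1), hp2, div_mul_eq_mul_div, div_mul_eq_mul_div,
          ← add_div, eq_div_iff hCne, Real.sin_sub, Real.sin_sub, Real.sin_sub]
        ring
  -- existence of a nonnegative direction
  have hexistsnn : ∀ p : ℝ × ℝ, ∃ k : ℕ, k ∈ Finset.range N ∧ 0 ≤ dot (m k) p := by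
    intro p
    obtain ⟨j, α, β, hα, hβ, h1, h2⟩ := hcov p
    have hred : ∀ i : ℤ, ∃ k : ℕ, k ∈ Finset.range N ∧ m i = m k := by
      intro i
      obtain ⟨k, hk1, _, hk3⟩ := per_shift N hNpos m hmper i
      exact ⟨k, Finset.mem_range.mpr hk1, hk3⟩
    by_cases hd1 : 0 ≤ dot (m j) p
    · obtain ⟨k, hk1, hk2⟩ := hred j
      exact ⟨k, hk1, by rwa [← hk2]⟩
    by_cases hd2 : 0 ≤ dot (m (j+1)) p
    · obtain ⟨k, hk1, hk2⟩ := hred (j+1)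
      exact ⟨k, hk1, by rwa [← hk2]⟩
    exfalso
    push_neg at hd1 hd2
    have hdpp : dot p p = α * dot (m j) p + β * dot (m (j+1)) p := by
      simp only [dot]
      rw [h1, h2]
      ring
    have hle : dot p p ≤ 0 := by
      rw [hdpp]
      have t1 := mul_nonpos_of_nonneg_of_nonpos hα (le_of_lt hd1)
      have t2 := mul_nonpos_of_nonneg_of_nonpos hβ (le_of_lt hd2)
      linarith
    have hp1 : p.1 = 0 := by
      simp only [dot] at hle
      nlinarith [sq_nonneg p.1, sq_nonneg p.2]
    have hp2 : p.2 = 0 := by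
      simp only [dot] at hle
      nlinarith [sq_nonneg p.1, sq_nonneg p.2]
    rw [show dot (m j) p = 0 by simp [dot, hp1, hp2]] at hd1
    exact lt_irrefl 0 hd1
  -- key consequence of (γ3a): on the local cone, m j · p ≥ 0
  have hmjp : ∀ (j : ℤ) (p : ℝ × ℝ), dot (m (j-1)) p ≤ dot (m j) p →
      dot (m (j+1)) p ≤ dot (m j) p → 0 ≤ dot (m j) p := by
    intro j p hA hB
    have h := Set.ext_iff.mp (hγ3a j) p
    simp only [Set.mem_setOf_eq] at h
    have hall := h.mpr ⟨hA, hB⟩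
    obtain ⟨k, hk1, hk2⟩ := hexistsnn p
    exact le_trans hk2 (hall k hk1)
  -- the cross product condition
  have hcruv : ∀ j : ℤ, b j * a (j+1) - a j * b (j+1) ≤ 0 := by
    intro j
    have hX : a j * (m j).2 - b j * (m j).1 < 0 := hXneg j
    by_contra hpos
    push_neg at hpos
    have hcrne : b j * a (j+1) - a j * b (j+1) ≠ 0 := ne_of_gt hpos
    set cr := b j * a (j+1) - a j * b (j+1) with hcr
    have hdgen : ∀ q : ℝ × ℝ, dot q ((-(b j) / cr, a j / cr) : ℝ × ℝ)
        = (a j * q.2 - b j * q.1) / cr := by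
      intro q
      simp only [dot]
      field_simp
      ring
    have hA : dot (m (j-1)) ((-(b j) / cr, a j / cr) : ℝ × ℝ)
        ≤ dot (m j) ((-(b j) / cr, a j / cr) : ℝ × ℝ) := by
      rw [hdgen, hdgen, hnum_prev j]
    have hB : dot (m (j+1)) ((-(b j) / cr, a j / cr) : ℝ × ℝ)
        ≤ dot (m j) ((-(b j) / cr, a j / cr) : ℝ × ℝ) := by
      rw [hdgen, hdgen, hnum_next j, ← hcr, sub_div, div_self hcrne]
      linarith
    have h0 := hmjp j _ hA hB
    rw [hdgen] at h0
    have hneg : (a j * (m j).2 - b j * (m j).1) / cr < 0 := div_neg_of_neg_of_pos hX hpos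
    linarith
  -- n j is in the Wulff shape: all constraints hold at n j
  have hdot_next : ∀ j : ℤ, dot (m (j+1)) (n j) ≤ 1 := by
    intro j
    rw [hdotn j (m (j+1)), hnum_next j]
    have hX : a j * (m j).2 - b j * (m j).1 < 0 := hXneg j
    have hXne : a j * (m j).2 - b j * (m j).1 ≠ 0 := ne_of_lt hX
    have hcr := hcruv j
    rw [show ((a j * (m j).2 - b j * (m j).1) - (b j * a (j+1) - a j * b (j+1)))
          / (a j * (m j).2 - b j * (m j).1)
        = 1 - (b j * a (j+1) - a j * b (j+1)) / (a j * (m j).2 - b j * (m j).1) by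
      field_simp]
    have hq : 0 ≤ (b j * a (j+1) - a j * b (j+1)) / (a j * (m j).2 - b j * (m j).1) := by
      rw [le_div_iff_of_neg hX]
      simpa using hcr
    linarith
  have hWn : ∀ j : ℤ, ∀ k ∈ Finset.range N, dot (m k) (n j) ≤ 1 := by
    intro j k hk
    have h := Set.ext_iff.mp (hγ3a j) (n j)
    simp only [Set.mem_setOf_eq] at h
    have hall := h.mpr ⟨le_of_eq ((hdot_prev j).trans (hdot_self j).symm),
      (hdot_next j).trans_eq (hdot_self j).symm⟩
    exact le_trans (hall k hk) (le_of_eq (hdot_self j))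
  have hγn : ∀ j : ℤ, γpol (n j) ≤ 1 := by
    intro j
    rw [hγpol]
    exact Finset.sup'_le _ _ (fun k hk => hWn j k hk)
  -- periodicity of n (via the explicit formula)
  have hnper : ∀ j : ℤ, n (j + N) = n j := by
    intro j
    have haper : a (j + N) = a j := by
      rw [ha, ha, hηper, hψper, show (j:ℤ) + N - 1 = (j - 1) + N by ring,
        hηper, hψper, Real.cos_add_two_pi, Real.cos_add_two_pi]
    have hbper : b (j + N) = b j := by
      rw [hb, hb, hηper, hψper, show (j:ℤ) + N - 1 = (j - 1) + N by ring,
        hηper, hψper, Real.sin_add_two_pi, Real.sin_add_two_pi]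
    rw [hnval (j + N), hnval j, haper, hbper, hmper j]
  -- Main proof
  intro p
  constructor
  · rintro s ⟨q, hq, rfl⟩
    rw [hγpol] at hq
    have hq' : ∀ i : ℤ, dot (m i) q ≤ 1 := by
      intro i
      obtain ⟨k, hk1, _, hk3⟩ := per_shift N hNpos m hmper i
      rw [hk3]
      exact le_trans (Finset.le_sup' (f := fun i : ℕ => dot (m (i : ℤ)) q) (Finset.mem_range.mpr hk1)) hq
    obtain ⟨j, α, β, hα, hβ, h1, h2⟩ := hcov p
    have hchain : dot p q = α * dot (m j) q + β * dot (m (j+1)) q := by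
      simp only [dot]
      rw [h1, h2]
      ring
    have hub1 : dot p q ≤ α + β := by
      rw [hchain]
      have t1 : α * dot (m j) q ≤ α * 1 := mul_le_mul_of_nonneg_left (hq' j) hα
      have t2 : β * dot (m (j+1)) q ≤ β * 1 := mul_le_mul_of_nonneg_left (hq' (j+1)) hβ
      linarith
    have hprev : dot (m j) (n (j+1)) = 1 := by
      have h := hdot_prev (j+1)
      rwa [show j + 1 - 1 = j by ring] at h
    have heq : dot (n (j+1)) p = α + β := by
      rw [hdotcomm]
      have h : dot p (n (j+1)) = α * dot (m j) (n (j+1)) + β * dot (m (j+1)) (n (j+1)) := by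
        simp only [dot]
        rw [h1, h2]
        ring
      rw [h, hprev, hdot_self (j+1)]
      ring
    obtain ⟨k, hk1, _, hk3⟩ := per_shift N hNpos n hnper (j+1)
    calc dot p q ≤ α + β := hub1
      _ = dot (n (j+1)) p := heq.symm
      _ = dot (n k) p := by rw [hk3]
      _ ≤ _ := Finset.le_sup' (f := fun i : ℕ => dot (n (i:ℤ)) p) (Finset.mem_range.mpr hk1)
  · intro w hw
    apply Finset.sup'_le
    intro k _
    exact hw ⟨n k, hγn k, hdotcomm p (n k)⟩
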